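/- arXiv:1808.10091 — 2 statements merged into one kernel-verified Lean document; each statement's English description precedes it below -/
import Mathlib

section
/- Under the same hypotheses (A : X → GL(d,ℝ) β-Hölder, with ‖𝒜ⁿ_x‖ ≤ K_ε e^{εn} and ‖(𝒜ⁿ_x)^{−1}‖ ≤ K_ε e^{εn} for all x, n and every ε > 0), the stable holonomies H^s_{x,y} = lim_{n→∞} (𝒜ⁿ_y)^{−1} 𝒜ⁿ_x (defined for y ∈ W^s_loc(x)) satisfy: (H1) H^s_{x,x} = I, and H^s_{y,z} · H^s_{x,y} = H^s_{x,z} whenever y, z ∈ W^s_loc(x); in particular (H^s_{x,y})^{−1} = H^s_{y,x}; and (H2) H^s_{x,y} = (𝒜ⁿ_y)^{−1} · H^s_{fⁿx, fⁿy} · 𝒜ⁿ_x for every n ∈ ℕ. -/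
open scoped Classical

/-- The subshift of finite type determined by a 0-1 transition matrix `M`:
the set of two-sided sequences all of whose transitions are allowed by `M`. -/
def SFT {k : ℕ} (M : Matrix (Fin k) (Fin k) ℕ) : Set (ℤ → Fin k) :=
  {x | ∀ n : ℤ, M (x n) (x (n + 1)) = 1}

/-- The (left) shift map `(f x)_n = x_{n+1}`. -/
def shift {k : ℕ} (x : ℤ → Fin k) : ℤ → Fin k := fun n => x (n + 1)

/-- `sep x y = min {|i| : x_i ≠ y_i}` (defined for `x ≠ y`). -/
noncomputable def sep {k : ℕ} (x y : ℤ → Fin k) : ℕ :=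
  sInf {m : ℕ | ∃ i : ℤ, i.natAbs = m ∧ x i ≠ y i}

/-- The distance `d(x,y) = λ^{sep x y}` for `x ≠ y`, and `d(x,x) = 0`. -/
noncomputable def dSFT {k : ℕ} (lam : ℝ) (x y : ℤ → Fin k) : ℝ :=
  if x = y then 0 else lam ^ sep x y

open scoped MatrixGroups Matrix.Norms.L2Operator

/-- The `GL(d,ℝ)`-valued cocycle generated by `A` over the shift:
`𝒜⁰_x = I` and `𝒜ⁿ⁺¹_x = A(fⁿx) · 𝒜ⁿ_x`. -/
def coc {k d : ℕ} (A : (ℤ → Fin k) → GL (Fin d) ℝ) :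
    (ℤ → Fin k) → ℕ → GL (Fin d) ℝ
  | _, 0 => 1
  | x, n + 1 => A (shift^[n] x) * coc A x n


lemma shift_iter {k : ℕ} (x : ℤ → Fin k) (n : ℕ) (i : ℤ) :
    shift^[n] x i = x (i + n) := by
  induction n generalizing x with
  | zero => simp
  | succ m ih =>
    rw [Function.iterate_succ_apply, ih]
    simp only [shift]
    congr 1
    push_cast
    ring

lemma shift_mem {k : ℕ} {M : Matrix (Fin k) (Fin k) ℕ} {x : ℤ → Fin k}
    (hx : x ∈ SFT M) (n : ℕ) : shift^[n] x ∈ SFT M := by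
  intro i
  rw [shift_iter, shift_iter]
  have := hx (i + n)
  convert this using 3
  ring

lemma coc_add {k d : ℕ} (A : (ℤ → Fin k) → GL (Fin d) ℝ) (x : ℤ → Fin k) (n m : ℕ) :
    coc A x (n + m) = coc A (shift^[n] x) m * coc A x n := by
  induction m with
  | zero => simp [coc]
  | succ m ih =>
    have : n + (m + 1) = (n + m) + 1 := by ring
    rw [this]
    show A (shift^[n+m] x) * coc A x (n+m) = _
    rw [ih, add_comm n m, Function.iterate_add_apply]
    simp [coc, mul_assoc]

/-- Properties (H1) and (H2) of the stable holonomies `H^s_{x,y} = lim (𝒜ⁿ_y)⁻¹ 𝒜ⁿ_x`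
of a β-Hölder `GL(d,ℝ)`-valued cocycle with sub-exponential growth over a subshift
of finite type. -/
theorem stmt_10 (k d : ℕ) (hk : 1 ≤ k) (M : Matrix (Fin k) (Fin k) ℕ)
    (hM : ∀ i j, M i j = 0 ∨ M i j = 1)
    (lam : ℝ) (hlam0 : 0 < lam) (hlam1 : lam < 1)
    (A : (ℤ → Fin k) → GL (Fin d) ℝ)
    (c₀ β : ℝ) (hc₀ : 0 < c₀) (hβ0 : 0 < β) (hβ1 : β ≤ 1)
    (hHolder : ∀ x ∈ SFT M, ∀ y ∈ SFT M,
      ‖(A x : Matrix (Fin d) (Fin d) ℝ) - (A y : Matrix (Fin d) (Fin d) ℝ)‖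
        ≤ c₀ * dSFT lam x y ^ β)
    (hgrowth : ∀ ε : ℝ, 0 < ε → ∃ K : ℝ, 1 ≤ K ∧ ∀ x ∈ SFT M, ∀ n : ℕ,
      ‖(coc A x n : Matrix (Fin d) (Fin d) ℝ)‖ ≤ K * Real.exp (ε * n) ∧
      ‖(((coc A x n)⁻¹ : GL (Fin d) ℝ) : Matrix (Fin d) (Fin d) ℝ)‖ ≤ K * Real.exp (ε * n))
    (Hs : (ℤ → Fin k) → (ℤ → Fin k) → Matrix (Fin d) (Fin d) ℝ)
    (hHs : ∀ x ∈ SFT M, ∀ y ∈ SFT M, (∀ i : ℤ, 0 ≤ i → y i = x i) →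
      Filter.Tendsto
        (fun n : ℕ => (((coc A y n)⁻¹ * coc A x n : GL (Fin d) ℝ) : Matrix (Fin d) (Fin d) ℝ))
        Filter.atTop (nhds (Hs x y))) :
    -- (H1) `H^s_{x,x} = I` and the composition rule, hence `(H^s_{x,y})⁻¹ = H^s_{y,x}`:
    (∀ x ∈ SFT M, Hs x x = 1) ∧
    (∀ x ∈ SFT M, ∀ y ∈ SFT M, ∀ z ∈ SFT M,
      (∀ i : ℤ, 0 ≤ i → y i = x i) → (∀ i : ℤ, 0 ≤ i → z i = x i) →
      Hs y z * Hs x y = Hs x z) ∧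
    (∀ x ∈ SFT M, ∀ y ∈ SFT M, (∀ i : ℤ, 0 ≤ i → y i = x i) →
      Hs x y * Hs y x = 1 ∧ Hs y x * Hs x y = 1) ∧
    -- (H2) `H^s_{x,y} = (𝒜ⁿ_y)⁻¹ H^s_{fⁿx, fⁿy} 𝒜ⁿ_x` for all `n`:
    (∀ x ∈ SFT M, ∀ y ∈ SFT M, (∀ i : ℤ, 0 ≤ i → y i = x i) → ∀ n : ℕ,
      Hs x y = (((coc A y n)⁻¹ : GL (Fin d) ℝ) : Matrix (Fin d) (Fin d) ℝ)
        * Hs (shift^[n] x) (shift^[n] y)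
        * ((coc A x n : GL (Fin d) ℝ) : Matrix (Fin d) (Fin d) ℝ)) := by
  have hid : ∀ x ∈ SFT M, Hs x x = 1 := by
    intro x hx
    have h := hHs x hx x hx (fun i _ => rfl)
    have h2 : Filter.Tendsto
        (fun n : ℕ => (((coc A x n)⁻¹ * coc A x n : GL (Fin d) ℝ) : Matrix (Fin d) (Fin d) ℝ))
        Filter.atTop (nhds (1 : Matrix (Fin d) (Fin d) ℝ)) := by
      simp only [inv_mul_cancel, Units.val_one]
      exact tendsto_const_nhds
    exact tendsto_nhds_unique h h2
  have hcomp : ∀ x ∈ SFT M, ∀ y ∈ SFT M, ∀ z ∈ SFT M,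
      (∀ i : ℤ, 0 ≤ i → y i = x i) → (∀ i : ℤ, 0 ≤ i → z i = x i) →
      Hs y z * Hs x y = Hs x z := by
    intro x hx y hy z hz hyx hzx
    have hzy : ∀ i : ℤ, 0 ≤ i → z i = y i := fun i hi => (hzx i hi).trans (hyx i hi).symm
    have h1 := hHs x hx y hy hyx
    have h2 := hHs y hy z hz hzy
    have h3 := hHs x hx z hz hzx
    have hmul := h2.mul h1
    have heq : (fun n : ℕ =>
        (((coc A z n)⁻¹ * coc A y n : GL (Fin d) ℝ) : Matrix (Fin d) (Fin d) ℝ) *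
        (((coc A y n)⁻¹ * coc A x n : GL (Fin d) ℝ) : Matrix (Fin d) (Fin d) ℝ))
        = fun n : ℕ =>
        (((coc A z n)⁻¹ * coc A x n : GL (Fin d) ℝ) : Matrix (Fin d) (Fin d) ℝ) := by
      funext n
      rw [← Units.val_mul]
      congr 1
      group
    rw [heq] at hmul
    exact tendsto_nhds_unique hmul h3
  refine ⟨hid, hcomp, ?_, ?_⟩
  · intro x hx y hy hyx
    have hxy : ∀ i : ℤ, 0 ≤ i → x i = y i := fun i hi => (hyx i hi).symm
    constructor
    · have := hcomp y hy x hx y hy hxy (fun i _ => rfl)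
      rwa [hid y hy] at this
    · have := hcomp x hx y hy x hx hyx (fun i _ => rfl)
      rwa [hid x hx] at this
  · intro x hx y hy hyx n
    have hx' := shift_mem hx n
    have hy' := shift_mem hy n
    have hyx' : ∀ i : ℤ, 0 ≤ i → shift^[n] y i = shift^[n] x i := by
      intro i hi
      rw [shift_iter, shift_iter]
      exact hyx _ (by omega)
    have h1 := hHs _ hx' _ hy' hyx'
    have hc1 : Filter.Tendsto
        (fun _ : ℕ => (((coc A y n)⁻¹ : GL (Fin d) ℝ) : Matrix (Fin d) (Fin d) ℝ))
        Filter.atTop (nhds (((coc A y n)⁻¹ : GL (Fin d) ℝ) : Matrix (Fin d) (Fin d) ℝ)) :=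
      tendsto_const_nhds
    have hc2 : Filter.Tendsto
        (fun _ : ℕ => ((coc A x n : GL (Fin d) ℝ) : Matrix (Fin d) (Fin d) ℝ))
        Filter.atTop (nhds ((coc A x n : GL (Fin d) ℝ) : Matrix (Fin d) (Fin d) ℝ)) :=
      tendsto_const_nhds
    have h2 := (hc1.mul h1).mul hc2
    have heq : (fun m : ℕ =>
        (((coc A y n)⁻¹ : GL (Fin d) ℝ) : Matrix (Fin d) (Fin d) ℝ) *
        (((coc A (shift^[n] y) m)⁻¹ * coc A (shift^[n] x) m : GL (Fin d) ℝ) :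
          Matrix (Fin d) (Fin d) ℝ) *
        ((coc A x n : GL (Fin d) ℝ) : Matrix (Fin d) (Fin d) ℝ))
        = fun m : ℕ =>
        (((coc A y (n + m))⁻¹ * coc A x (n + m) : GL (Fin d) ℝ) :
          Matrix (Fin d) (Fin d) ℝ) := by
      funext m
      rw [coc_add A x n m, coc_add A y n m, mul_inv_rev]
      simp only [Units.val_mul]
      noncomm_ring
    rw [heq] at h2
    have h3 : Filter.Tendsto
        (fun m : ℕ => (((coc A y (n + m))⁻¹ * coc A x (n + m) : GL (Fin d) ℝ) :
          Matrix (Fin d) (Fin d) ℝ))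
        Filter.atTop (nhds (Hs x y)) := by
      have := (hHs x hx y hy hyx).comp (Filter.tendsto_add_atTop_nat n)
      simpa [Function.comp_def, Nat.add_comm n] using this
    exact tendsto_nhds_unique h3 h2
end

section
/- Let A : X → GL(d,ℝ) satisfy: (i) A is β-Hölder, i.e. there are c₀ > 0 and β ∈ (0,1] with ‖A(x) − A(y)‖ ≤ c₀ d(x,y)^β for all x, y ∈ X; and (ii) for every ε > 0 there is K_ε ≥ 1 such that ‖𝒜ⁿ_x‖ ≤ K_ε e^{ε|n|} and ‖(𝒜ⁿ_x)^{−1}‖ ≤ K_ε e^{ε|n|} for all x ∈ X and n ∈ ℤ. Then there is a constant C such that for every x ∈ X and every y ∈ W^u_loc(x): the limit H^u_{x,y} = lim_{n→∞} (𝒜^{−n}_y)^{−1} 𝒜^{−n}_x exists in GL(d,ℝ), and ‖(𝒜^{−n}_y)^{−1} 𝒜^{−n}_x − I‖ ≤ C d(x,y)^β for all n ∈ ℕ; in particular ‖H^u_{x,y} − I‖ ≤ C d(x,y)^β. -/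
open scoped Classical

open scoped MatrixGroups Matrix.Norms.L2Operator

/-- The inverse shift map `(f⁻¹ x)_n = x_{n-1}`. -/
def shiftInv {k : ℕ} (x : ℤ → Fin k) : ℤ → Fin k := fun n => x (n - 1)

/-- The extension of the cocycle to `ℤ`: `𝒜⁻ⁿ_x = (𝒜ⁿ_{f⁻ⁿx})⁻¹`. -/
def cocZ {k d : ℕ} (A : (ℤ → Fin k) → GL (Fin d) ℝ) (x : ℤ → Fin k) (n : ℤ) :
    GL (Fin d) ℝ :=
  if 0 ≤ n then coc A x n.toNat else (coc A (shiftInv^[(-n).toNat] x) (-n).toNat)⁻¹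

-- helpers

lemma shiftInv_iter_apply {k : ℕ} (x : ℤ → Fin k) (m : ℕ) (i : ℤ) :
    (shiftInv^[m] x) i = x (i - m) := by
  induction m generalizing i with
  | zero => simp
  | succ m ih =>
    rw [Function.iterate_succ_apply']
    show (shiftInv^[m] x) (i - 1) = _
    rw [ih]
    congr 1
    push_cast
    ring

lemma shift_shiftInv_iter {k : ℕ} (x : ℤ → Fin k) (m : ℕ) :
    shift (shiftInv^[m+1] x) = shiftInv^[m] x := by
  funext i
  show (shiftInv^[m+1] x) (i + 1) = _
  rw [shiftInv_iter_apply, shiftInv_iter_apply]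
  congr 1
  push_cast
  ring

lemma shiftInv_mem_SFT {k : ℕ} {M : Matrix (Fin k) (Fin k) ℕ} {x : ℤ → Fin k}
    (hx : x ∈ SFT M) (m : ℕ) : shiftInv^[m] x ∈ SFT M := by
  intro n
  rw [shiftInv_iter_apply, shiftInv_iter_apply]
  have := hx (n - m)
  convert this using 3
  ring

lemma dSFT_nonneg {k : ℕ} {lam : ℝ} (h : 0 ≤ lam) (x y : ℤ → Fin k) :
    0 ≤ dSFT lam x y := by
  unfold dSFT; split
  · exact le_refl 0
  · exact pow_nonneg h _

lemma dSFT_symm {k : ℕ} (lam : ℝ) (x y : ℤ → Fin k) : dSFT lam x y = dSFT lam y x := by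
  unfold dSFT sep
  by_cases h : x = y
  · simp [h]
  · rw [if_neg h, if_neg (Ne.symm h)]
    congr 2
    ext m
    exact ⟨fun ⟨i, hi, hne⟩ => ⟨i, hi, hne.symm⟩, fun ⟨i, hi, hne⟩ => ⟨i, hi, hne.symm⟩⟩

lemma dSFT_shiftInv_le {k : ℕ} {lam : ℝ} (hlam0 : 0 < lam) (hlam1 : lam < 1)
    {x y : ℤ → Fin k} (hagree : ∀ i : ℤ, i ≤ 0 → y i = x i) (m : ℕ) :
    dSFT lam (shiftInv^[m] y) (shiftInv^[m] x) ≤ lam ^ m * dSFT lam y x := by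
  by_cases h : y = x
  · subst h
    simp [dSFT]
  · have h' : shiftInv^[m] y ≠ shiftInv^[m] x := by
      intro he
      apply h
      funext j
      have := congrFun he (j + m)
      rwa [shiftInv_iter_apply, shiftInv_iter_apply, add_sub_cancel_right] at this
    rw [dSFT, if_neg h', dSFT, if_neg h, ← pow_add]
    apply pow_le_pow_of_le_one hlam0.le hlam1.le
    -- m + sep y x ≤ sep (shiftInv^[m] y) (shiftInv^[m] x)
    apply le_csInf
    · obtain ⟨i, hi⟩ := Function.ne_iff.mp h'
      exact ⟨i.natAbs, i, rfl, hi⟩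
    · rintro t ⟨i, rfl, hne⟩
      rw [shiftInv_iter_apply, shiftInv_iter_apply] at hne
      have hpos : 0 < i - m := by
        by_contra hc
        exact hne (hagree (i - m) (by omega))
      have hmem : (i - m).natAbs ∈ {m : ℕ | ∃ j : ℤ, j.natAbs = m ∧ y j ≠ x j} :=
        ⟨i - m, rfl, hne⟩
      have hs : sep y x ≤ (i - m).natAbs := Nat.sInf_le hmem
      omega

-- cocycle helpers

lemma coc_succ' {k d : ℕ} (A : (ℤ → Fin k) → GL (Fin d) ℝ) (x : ℤ → Fin k) (n : ℕ) :
    coc A x (n + 1) = coc A (shift x) n * A x := by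
  induction n with
  | zero => simp [coc]
  | succ n ih =>
    show A (shift^[n+1] x) * coc A x (n+1) = coc A (shift x) (n+1) * A x
    rw [ih, Function.iterate_succ_apply]
    show A (shift^[n] (shift x)) * (coc A (shift x) n * A x)
       = (A (shift^[n] (shift x)) * coc A (shift x) n) * A x
    rw [mul_assoc]

lemma coc_shiftInv_succ {k d : ℕ} (A : (ℤ → Fin k) → GL (Fin d) ℝ) (z : ℤ → Fin k) (n : ℕ) :
    coc A (shiftInv^[n+1] z) (n + 1) = coc A (shiftInv^[n] z) n * A (shiftInv^[n+1] z) := by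
  rw [coc_succ', shift_shiftInv_iter]

lemma cocZ_neg {k d : ℕ} (A : (ℤ → Fin k) → GL (Fin d) ℝ) (x : ℤ → Fin k) (n : ℕ) :
    cocZ A x (-(n : ℤ)) = (coc A (shiftInv^[n] x) n)⁻¹ := by
  rcases Nat.eq_zero_or_pos n with rfl | hn
  · simp [cocZ, coc]
  · rw [cocZ, if_neg (by omega)]
    simp

lemma cocZ_one {k d : ℕ} (A : (ℤ → Fin k) → GL (Fin d) ℝ) (x : ℤ → Fin k) :
    cocZ A x 1 = A x := by
  rw [cocZ, if_pos (by omega)]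
  show coc A x 1 = A x
  simp [coc]

lemma key_estimate {k d : ℕ} {M : Matrix (Fin k) (Fin k) ℕ}
    {lam : ℝ} (hlam0 : 0 < lam) (hlam1 : lam < 1)
    {A : (ℤ → Fin k) → GL (Fin d) ℝ} {c₀ β : ℝ} (hc₀ : 0 < c₀) (hβ0 : 0 < β)
    (hHolder : ∀ x ∈ SFT M, ∀ y ∈ SFT M,
      ‖(A x : Matrix (Fin d) (Fin d) ℝ) - (A y : Matrix (Fin d) (Fin d) ℝ)‖
        ≤ c₀ * dSFT lam x y ^ β)
    {ε K : ℝ} (hε : 0 < ε) (hK : 1 ≤ K)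
    (hg : ∀ x ∈ SFT M, ∀ n : ℤ,
      ‖(cocZ A x n : Matrix (Fin d) (Fin d) ℝ)‖ ≤ K * Real.exp (ε * n.natAbs) ∧
      ‖(((cocZ A x n)⁻¹ : GL (Fin d) ℝ) : Matrix (Fin d) (Fin d) ℝ)‖
        ≤ K * Real.exp (ε * n.natAbs))
    {x y : ℤ → Fin k} (hx : x ∈ SFT M) (hy : y ∈ SFT M)
    (hagree : ∀ i : ℤ, i ≤ 0 → y i = x i) (n : ℕ) :
    ‖(((cocZ A y (-((n + 1 : ℕ) : ℤ)))⁻¹ * cocZ A x (-((n + 1 : ℕ) : ℤ)) :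
          GL (Fin d) ℝ) : Matrix (Fin d) (Fin d) ℝ)
      - (((cocZ A y (-(n : ℤ)))⁻¹ * cocZ A x (-(n : ℤ)) : GL (Fin d) ℝ) :
          Matrix (Fin d) (Fin d) ℝ)‖
    ≤ (c₀ * K ^ 3 * Real.exp ε * lam ^ β * dSFT lam x y ^ β)
        * (Real.exp ε ^ 2 * lam ^ β) ^ n := by
  have hK0 : (0:ℝ) < K := lt_of_lt_of_le one_pos hK
  have hE0 : (0:ℝ) < Real.exp ε := Real.exp_pos _
  have hL0 : (0:ℝ) ≤ lam ^ β := (Real.rpow_pos_of_pos hlam0 β).le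
  have hd0 : (0:ℝ) ≤ dSFT lam x y ^ β :=
    Real.rpow_nonneg (dSFT_nonneg hlam0.le _ _) β
  set P : GL (Fin d) ℝ := (cocZ A y (-(n : ℤ)))⁻¹ with hPdef
  set R : GL (Fin d) ℝ := cocZ A x (-(n : ℤ)) with hRdef
  set Ay : GL (Fin d) ℝ := A (shiftInv^[n+1] y) with hAydef
  set Ax' : GL (Fin d) ℝ := A (shiftInv^[n+1] x) with hAxdef
  have hGL : (cocZ A y (-((n + 1 : ℕ) : ℤ)))⁻¹ * cocZ A x (-((n + 1 : ℕ) : ℤ))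
      = P * (Ay * Ax'⁻¹) * R := by
    rw [cocZ_neg A y (n+1), cocZ_neg A x (n+1), coc_shiftInv_succ, coc_shiftInv_succ,
      hPdef, hRdef, cocZ_neg A y n, cocZ_neg A x n, hAydef, hAxdef]
    group
  have hmatrix :
      ((((cocZ A y (-((n + 1 : ℕ) : ℤ)))⁻¹ * cocZ A x (-((n + 1 : ℕ) : ℤ)) :
          GL (Fin d) ℝ) : Matrix (Fin d) (Fin d) ℝ)
        - ((P * R : GL (Fin d) ℝ) : Matrix (Fin d) (Fin d) ℝ))
      = (P : Matrix (Fin d) (Fin d) ℝ)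
          * (((Ay : Matrix (Fin d) (Fin d) ℝ) - (Ax' : Matrix (Fin d) (Fin d) ℝ))
              * ((Ax'⁻¹ : GL (Fin d) ℝ) : Matrix (Fin d) (Fin d) ℝ))
          * (R : Matrix (Fin d) (Fin d) ℝ) := by
    rw [hGL]
    simp only [Units.val_mul]
    rw [sub_mul, Ax'.mul_inv]
    noncomm_ring
  have hP : ‖(P : Matrix (Fin d) (Fin d) ℝ)‖ ≤ K * Real.exp ε ^ n := by
    have h := (hg y hy (-(n : ℤ))).2
    rw [Int.natAbs_neg, Int.natAbs_natCast, mul_comm ε, Real.exp_nat_mul] at h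
    exact h
  have hR : ‖(R : Matrix (Fin d) (Fin d) ℝ)‖ ≤ K * Real.exp ε ^ n := by
    have h := (hg x hx (-(n : ℤ))).1
    rw [Int.natAbs_neg, Int.natAbs_natCast, mul_comm ε, Real.exp_nat_mul] at h
    exact h
  have hAinv : ‖((Ax'⁻¹ : GL (Fin d) ℝ) : Matrix (Fin d) (Fin d) ℝ)‖
      ≤ K * Real.exp ε := by
    have h := (hg (shiftInv^[n+1] x) (shiftInv_mem_SFT hx (n+1)) 1).2
    rw [cocZ_one] at h
    simpa only [Int.natAbs_one, Nat.cast_one, mul_one] using h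
  have hA : ‖(Ay : Matrix (Fin d) (Fin d) ℝ) - (Ax' : Matrix (Fin d) (Fin d) ℝ)‖
      ≤ c₀ * ((lam ^ β) ^ (n+1) * dSFT lam x y ^ β) := by
    have h1 := hHolder _ (shiftInv_mem_SFT hy (n+1)) _ (shiftInv_mem_SFT hx (n+1))
    have h2 : dSFT lam (shiftInv^[n+1] y) (shiftInv^[n+1] x)
        ≤ lam ^ (n+1) * dSFT lam x y := by
      rw [dSFT_symm lam x y]
      exact dSFT_shiftInv_le hlam0 hlam1 hagree (n+1)
    have h3 : dSFT lam (shiftInv^[n+1] y) (shiftInv^[n+1] x) ^ β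
        ≤ (lam ^ (n+1) * dSFT lam x y) ^ β :=
      Real.rpow_le_rpow (dSFT_nonneg hlam0.le _ _) h2 hβ0.le
    have h4 : ((lam ^ (n+1) : ℝ) * dSFT lam x y) ^ β
        = (lam ^ β) ^ (n+1) * dSFT lam x y ^ β := by
      rw [Real.mul_rpow (by positivity) (dSFT_nonneg hlam0.le _ _),
        ← Real.rpow_natCast lam (n+1), ← Real.rpow_mul hlam0.le,
        mul_comm ((n+1 : ℕ) : ℝ) β, Real.rpow_mul hlam0.le, Real.rpow_natCast]
    calc ‖(Ay : Matrix (Fin d) (Fin d) ℝ) - (Ax' : Matrix (Fin d) (Fin d) ℝ)‖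
        ≤ c₀ * dSFT lam (shiftInv^[n+1] y) (shiftInv^[n+1] x) ^ β := h1
      _ ≤ c₀ * ((lam ^ β) ^ (n+1) * dSFT lam x y ^ β) := by
          rw [← h4]; exact mul_le_mul_of_nonneg_left h3 hc₀.le
  have hBn : (((cocZ A y (-(n : ℤ)))⁻¹ * cocZ A x (-(n : ℤ)) : GL (Fin d) ℝ) :
      Matrix (Fin d) (Fin d) ℝ) = ((P * R : GL (Fin d) ℝ) : Matrix (Fin d) (Fin d) ℝ) := rfl
  rw [hBn, hmatrix]
  have hmid0 : (0:ℝ) ≤ c₀ * ((lam ^ β) ^ (n+1) * dSFT lam x y ^ β) * (K * Real.exp ε) :=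
    mul_nonneg (mul_nonneg hc₀.le (mul_nonneg (pow_nonneg hL0 _) hd0))
      (mul_nonneg hK0.le hE0.le)
  calc ‖(P : Matrix (Fin d) (Fin d) ℝ)
          * (((Ay : Matrix (Fin d) (Fin d) ℝ) - (Ax' : Matrix (Fin d) (Fin d) ℝ))
              * ((Ax'⁻¹ : GL (Fin d) ℝ) : Matrix (Fin d) (Fin d) ℝ))
          * (R : Matrix (Fin d) (Fin d) ℝ)‖
      ≤ ‖(P : Matrix (Fin d) (Fin d) ℝ)‖
          * (‖(Ay : Matrix (Fin d) (Fin d) ℝ) - (Ax' : Matrix (Fin d) (Fin d) ℝ)‖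
              * ‖((Ax'⁻¹ : GL (Fin d) ℝ) : Matrix (Fin d) (Fin d) ℝ)‖)
          * ‖(R : Matrix (Fin d) (Fin d) ℝ)‖ := by
        refine (norm_mul_le _ _).trans ?_
        exact mul_le_mul_of_nonneg_right
          ((norm_mul_le _ _).trans
            (mul_le_mul_of_nonneg_left (norm_mul_le _ _) (norm_nonneg _)))
          (norm_nonneg _)
    _ ≤ (K * Real.exp ε ^ n)
          * (c₀ * ((lam ^ β) ^ (n+1) * dSFT lam x y ^ β) * (K * Real.exp ε))
          * (K * Real.exp ε ^ n) := by
        refine mul_le_mul (mul_le_mul hP ?_ ?_ ?_) hR (norm_nonneg _) ?_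
        · exact mul_le_mul hA hAinv (norm_nonneg _)
            (mul_nonneg hc₀.le (mul_nonneg (pow_nonneg hL0 _) hd0))
        · exact mul_nonneg (norm_nonneg _) (norm_nonneg _)
        · exact mul_nonneg hK0.le (pow_nonneg hE0.le n)
        · exact mul_nonneg (mul_nonneg hK0.le (pow_nonneg hE0.le n)) hmid0
    _ = (c₀ * K ^ 3 * Real.exp ε * lam ^ β * dSFT lam x y ^ β)
          * (Real.exp ε ^ 2 * lam ^ β) ^ n := by ring

lemma conv_aux {k d : ℕ} {M : Matrix (Fin k) (Fin k) ℕ}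
    {lam : ℝ} (hlam0 : 0 < lam) (hlam1 : lam < 1)
    {A : (ℤ → Fin k) → GL (Fin d) ℝ} {c₀ β : ℝ} (hc₀ : 0 < c₀) (hβ0 : 0 < β)
    (hHolder : ∀ x ∈ SFT M, ∀ y ∈ SFT M,
      ‖(A x : Matrix (Fin d) (Fin d) ℝ) - (A y : Matrix (Fin d) (Fin d) ℝ)‖
        ≤ c₀ * dSFT lam x y ^ β)
    {ε K : ℝ} (hε : 0 < ε) (hK : 1 ≤ K)
    (hg : ∀ x ∈ SFT M, ∀ n : ℤ,
      ‖(cocZ A x n : Matrix (Fin d) (Fin d) ℝ)‖ ≤ K * Real.exp (ε * n.natAbs) ∧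
      ‖(((cocZ A x n)⁻¹ : GL (Fin d) ℝ) : Matrix (Fin d) (Fin d) ℝ)‖
        ≤ K * Real.exp (ε * n.natAbs))
    (hr1 : Real.exp ε ^ 2 * lam ^ β < 1)
    {x y : ℤ → Fin k} (hx : x ∈ SFT M) (hy : y ∈ SFT M)
    (hagree : ∀ i : ℤ, i ≤ 0 → y i = x i) :
    ∃ L : Matrix (Fin d) (Fin d) ℝ,
      Filter.Tendsto
        (fun n : ℕ =>
          (((cocZ A y (-(n : ℤ)))⁻¹ * cocZ A x (-(n : ℤ)) : GL (Fin d) ℝ) :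
            Matrix (Fin d) (Fin d) ℝ))
        Filter.atTop (nhds L) ∧
      (∀ n : ℕ,
        ‖(((cocZ A y (-(n : ℤ)))⁻¹ * cocZ A x (-(n : ℤ)) : GL (Fin d) ℝ) :
            Matrix (Fin d) (Fin d) ℝ) - 1‖
          ≤ 2 * (c₀ * K ^ 3 * Real.exp ε * lam ^ β)
              / (1 - Real.exp ε ^ 2 * lam ^ β) * dSFT lam x y ^ β) ∧
      ‖L - 1‖ ≤ 2 * (c₀ * K ^ 3 * Real.exp ε * lam ^ β)
              / (1 - Real.exp ε ^ 2 * lam ^ β) * dSFT lam x y ^ β := by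
  have hK0 : (0:ℝ) < K := lt_of_lt_of_le one_pos hK
  have hE0 : (0:ℝ) < Real.exp ε := Real.exp_pos _
  have hL0 : (0:ℝ) ≤ lam ^ β := (Real.rpow_pos_of_pos hlam0 β).le
  have hd0 : (0:ℝ) ≤ dSFT lam x y ^ β :=
    Real.rpow_nonneg (dSFT_nonneg hlam0.le _ _) β
  set f : ℕ → Matrix (Fin d) (Fin d) ℝ := fun n : ℕ =>
    (((cocZ A y (-(n : ℤ)))⁻¹ * cocZ A x (-(n : ℤ)) : GL (Fin d) ℝ) :
      Matrix (Fin d) (Fin d) ℝ) with hfdef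
  set r : ℝ := Real.exp ε ^ 2 * lam ^ β with hrdef
  set C₁ : ℝ := c₀ * K ^ 3 * Real.exp ε * lam ^ β with hC₁def
  have hr0 : (0:ℝ) ≤ r := mul_nonneg (pow_nonneg hE0.le 2) hL0
  have h1r : (0:ℝ) < 1 - r := by linarith
  have hC₁0 : (0:ℝ) ≤ C₁ :=
    mul_nonneg (mul_nonneg (mul_nonneg hc₀.le (pow_nonneg hK0.le 3)) hE0.le) hL0
  have hstep : ∀ n : ℕ, dist (f n) (f (n + 1)) ≤ (C₁ * dSFT lam x y ^ β) * r ^ n := by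
    intro n
    rw [dist_eq_norm, norm_sub_rev]
    exact key_estimate hlam0 hlam1 hc₀ hβ0 hHolder hε hK hg hx hy hagree n
  have hcauchy : CauchySeq f :=
    cauchySeq_of_le_geometric r (C₁ * dSFT lam x y ^ β) hr1 hstep
  obtain ⟨L, hL⟩ := cauchySeq_tendsto_of_complete hcauchy
  have hdist : ∀ n : ℕ, dist (f n) L ≤ (C₁ * dSFT lam x y ^ β) * r ^ n / (1 - r) :=
    fun n => dist_le_of_le_geometric_of_tendsto r _ hr1 hstep hL n
  have hf0 : f 0 = 1 := by
    show (((cocZ A y (-(0 : ℤ)))⁻¹ * cocZ A x (-(0 : ℤ)) : GL (Fin d) ℝ) :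
      Matrix (Fin d) (Fin d) ℝ) = 1
    norm_num
    simp [cocZ, coc]
  have hbound : ∀ n : ℕ, ‖f n - 1‖ ≤ 2 * C₁ / (1 - r) * dSFT lam x y ^ β := by
    intro n
    have htri : dist (f n) (f 0) ≤ dist (f n) L + dist (f 0) L := dist_triangle_right _ _ _
    have h1 := hdist n
    have h2 := hdist 0
    have hrn : r ^ n ≤ 1 := pow_le_one₀ hr0 (by linarith)
    have hmul : (C₁ * dSFT lam x y ^ β) * r ^ n ≤ C₁ * dSFT lam x y ^ β :=
      mul_le_of_le_one_right (mul_nonneg hC₁0 hd0) hrn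
    have h3 : (C₁ * dSFT lam x y ^ β) * r ^ n / (1 - r)
        ≤ C₁ * dSFT lam x y ^ β / (1 - r) := (div_le_div_iff_of_pos_right h1r).mpr hmul
    have e : 2 * C₁ / (1 - r) * dSFT lam x y ^ β
        = C₁ * dSFT lam x y ^ β / (1 - r) + (C₁ * dSFT lam x y ^ β) * r ^ 0 / (1 - r) := by
      rw [pow_zero]; field_simp; ring
    rw [← hf0, ← dist_eq_norm, e]
    linarith
  have hL1 : Filter.Tendsto (fun n => ‖f n - 1‖) Filter.atTop (nhds ‖L - 1‖) :=
    ((hL.sub tendsto_const_nhds).norm)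
  refine ⟨L, hL, hbound, le_of_tendsto hL1 (Filter.Eventually.of_forall hbound)⟩

/-- Existence and Hölder estimates of unstable holonomies
`H^u_{x,y} = lim_{n→∞} (𝒜⁻ⁿ_y)⁻¹ 𝒜⁻ⁿ_x` for a β-Hölder `GL(d,ℝ)`-valued cocycle with
sub-exponential growth over a subshift of finite type (Proposition 3.3). -/
theorem stmt_15 (k d : ℕ) (hk : 1 ≤ k) (M : Matrix (Fin k) (Fin k) ℕ)
    (hM : ∀ i j, M i j = 0 ∨ M i j = 1)
    (lam : ℝ) (hlam0 : 0 < lam) (hlam1 : lam < 1)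
    (A : (ℤ → Fin k) → GL (Fin d) ℝ)
    (c₀ β : ℝ) (hc₀ : 0 < c₀) (hβ0 : 0 < β) (hβ1 : β ≤ 1)
    (hHolder : ∀ x ∈ SFT M, ∀ y ∈ SFT M,
      ‖(A x : Matrix (Fin d) (Fin d) ℝ) - (A y : Matrix (Fin d) (Fin d) ℝ)‖
        ≤ c₀ * dSFT lam x y ^ β)
    (hgrowth : ∀ ε : ℝ, 0 < ε → ∃ K : ℝ, 1 ≤ K ∧ ∀ x ∈ SFT M, ∀ n : ℤ,
      ‖(cocZ A x n : Matrix (Fin d) (Fin d) ℝ)‖ ≤ K * Real.exp (ε * n.natAbs) ∧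
      ‖(((cocZ A x n)⁻¹ : GL (Fin d) ℝ) : Matrix (Fin d) (Fin d) ℝ)‖
        ≤ K * Real.exp (ε * n.natAbs)) :
    ∃ C : ℝ, ∀ x ∈ SFT M, ∀ y ∈ SFT M, (∀ i : ℤ, i ≤ 0 → y i = x i) →
      (∃ Hu : GL (Fin d) ℝ,
        Filter.Tendsto
          (fun n : ℕ =>
            (((cocZ A y (-(n : ℤ)))⁻¹ * cocZ A x (-(n : ℤ)) : GL (Fin d) ℝ) :
              Matrix (Fin d) (Fin d) ℝ))
          Filter.atTop (nhds (Hu : Matrix (Fin d) (Fin d) ℝ)) ∧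
        ‖(Hu : Matrix (Fin d) (Fin d) ℝ) - 1‖ ≤ C * dSFT lam x y ^ β) ∧
      ∀ n : ℕ,
        ‖(((cocZ A y (-(n : ℤ)))⁻¹ * cocZ A x (-(n : ℤ)) : GL (Fin d) ℝ) :
            Matrix (Fin d) (Fin d) ℝ) - 1‖ ≤ C * dSFT lam x y ^ β := by
  have hlog : Real.log lam < 0 := Real.log_neg hlam0 hlam1
  set ε : ℝ := -(β * Real.log lam) / 4 with hεdef
  have hε : 0 < ε := by
    have : β * Real.log lam < 0 := mul_neg_of_pos_of_neg hβ0 hlog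
    rw [hεdef]; linarith
  obtain ⟨K, hK, hg⟩ := hgrowth ε hε
  have hr1 : Real.exp ε ^ 2 * lam ^ β < 1 := by
    rw [Real.rpow_def_of_pos hlam0, ← Real.exp_nat_mul, ← Real.exp_add]
    rw [Real.exp_lt_one_iff]
    push_cast
    rw [hεdef]
    nlinarith [mul_neg_of_pos_of_neg hβ0 hlog]
  refine ⟨2 * (c₀ * K ^ 3 * Real.exp ε * lam ^ β) / (1 - Real.exp ε ^ 2 * lam ^ β), ?_⟩
  intro x hx y hy hagree
  obtain ⟨L, hLt, hbn, hbL⟩ :=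
    conv_aux hlam0 hlam1 hc₀ hβ0 hHolder hε hK hg hr1 hx hy hagree
  obtain ⟨L', hL't, -, -⟩ :=
    conv_aux hlam0 hlam1 hc₀ hβ0 hHolder hε hK hg hr1 hy hx
      (fun i hi => (hagree i hi).symm)
  have hmul : ∀ n : ℕ,
      (((cocZ A y (-(n : ℤ)))⁻¹ * cocZ A x (-(n : ℤ)) : GL (Fin d) ℝ) :
          Matrix (Fin d) (Fin d) ℝ)
        * (((cocZ A x (-(n : ℤ)))⁻¹ * cocZ A y (-(n : ℤ)) : GL (Fin d) ℝ) :
          Matrix (Fin d) (Fin d) ℝ) = 1 := by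
    intro n
    have hG : ((cocZ A y (-(n : ℤ)))⁻¹ * cocZ A x (-(n : ℤ)))
        * ((cocZ A x (-(n : ℤ)))⁻¹ * cocZ A y (-(n : ℤ))) = (1 : GL (Fin d) ℝ) := by
      group
    calc (((cocZ A y (-(n : ℤ)))⁻¹ * cocZ A x (-(n : ℤ)) : GL (Fin d) ℝ) :
            Matrix (Fin d) (Fin d) ℝ)
          * (((cocZ A x (-(n : ℤ)))⁻¹ * cocZ A y (-(n : ℤ)) : GL (Fin d) ℝ) :
            Matrix (Fin d) (Fin d) ℝ)
        = ((((cocZ A y (-(n : ℤ)))⁻¹ * cocZ A x (-(n : ℤ)))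
            * ((cocZ A x (-(n : ℤ)))⁻¹ * cocZ A y (-(n : ℤ))) : GL (Fin d) ℝ) :
            Matrix (Fin d) (Fin d) ℝ) := (Units.val_mul _ _).symm
      _ = ((1 : GL (Fin d) ℝ) : Matrix (Fin d) (Fin d) ℝ) := by rw [hG]
      _ = 1 := Units.val_one
  have h1 : L * L' = 1 := by
    have t1 := hLt.mul hL't
    have t2 : (fun n : ℕ =>
        (((cocZ A y (-(n : ℤ)))⁻¹ * cocZ A x (-(n : ℤ)) : GL (Fin d) ℝ) :
            Matrix (Fin d) (Fin d) ℝ)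
          * (((cocZ A x (-(n : ℤ)))⁻¹ * cocZ A y (-(n : ℤ)) : GL (Fin d) ℝ) :
            Matrix (Fin d) (Fin d) ℝ))
        = fun _ : ℕ => (1 : Matrix (Fin d) (Fin d) ℝ) := funext hmul
    rw [t2] at t1
    exact tendsto_nhds_unique t1 tendsto_const_nhds
  have h2 : L' * L = 1 := mul_eq_one_comm.mp h1
  exact ⟨⟨⟨L, L', h1, h2⟩, hLt, hbL⟩, hbn⟩
end
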